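/- Let P = Σ_{j=1}^n α_j δ_{y_j} be a finite mixture of Dirac measures with all y_j contained in [z_1, z_K]. Then the Cramér projection Π_C(P) onto the support {z_1,...,z_K} (defined by linearly extending the projection of Diracs) satisfies E[Π_C(P)] = E[P]. -/

import Mathlib

open Finset

/-- The Cramér projection of a finite mixture `Σ_j α_j δ_{y_j}` (with each `y_j` lying
in some interval `[z_{i_j}, z_{i_j + 1}]` of the support) preserves the expectation:
the expectation of the projected mixture equals `Σ_j α_j y_j`. -/
theorem cramer_projection_mixture_expectation
    (K n : ℕ) (z : Fin (K + 1) → ℝ) (hz : StrictMono z)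
    (α y : Fin n → ℝ) (idx : Fin n → Fin K)
    (hy : ∀ j, z (idx j).castSucc ≤ y j ∧ y j ≤ z (idx j).succ) :
    (∑ k : Fin (K + 1),
      (∑ j : Fin n, α j *
        (if k = (idx j).castSucc then
            (z (idx j).succ - y j) / (z (idx j).succ - z (idx j).castSucc)
          else if k = (idx j).succ then
            (y j - z (idx j).castSucc) / (z (idx j).succ - z (idx j).castSucc)
          else 0)) * z k)
      = ∑ j : Fin n, α j * y j := by
  simp only [Finset.sum_mul]
  rw [Finset.sum_comm]
  refine Finset.sum_congr rfl fun j _ => ?_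
  set a := (idx j).castSucc with ha
  set b := (idx j).succ with hb
  have hab : a ≠ b := (Fin.castSucc_lt_succ).ne
  have hzab : z b - z a ≠ 0 := sub_ne_zero.mpr (hz Fin.castSucc_lt_succ).ne'
  have hstep : ∀ k : Fin (K + 1),
      α j * (if k = a then (z b - y j) / (z b - z a)
        else if k = b then (y j - z a) / (z b - z a) else 0) * z k
      = (if k = a then α j * ((z b - y j) / (z b - z a)) * z a else 0)
        + (if k = b then α j * ((y j - z a) / (z b - z a)) * z b else 0) := by
    intro k
    by_cases h1 : k = a
    · subst h1; simp [hab]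
    · by_cases h2 : k = b <;> simp [h1, h2, hab.symm]
  rw [Finset.sum_congr rfl fun k _ => hstep k, Finset.sum_add_distrib,
    Finset.sum_ite_eq' _ a, Finset.sum_ite_eq' _ b]
  simp only [Finset.mem_univ, if_true]
  field_simp
  ring
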